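/- arXiv:1605.07686 — 5 statements merged into one kernel-verified Lean document; each statement's English description precedes it below -/
import Mathlib

section
/- Let Y be a finite nonempty set and θ : Y → ℝ. If ε(y), y ∈ Y, are i.i.d. random variables each with Gumbel distribution with CDF F(t) = exp(−exp(−(t+c))) (c the Euler constant), then for each y ∈ Y the probability that y maximizes θ(y)+ε(y) equals exp(θ(y)) / Σ_{y'∈Y} exp(θ(y')). -/
open MeasureTheory Real Set

namespace GumbelAux

noncomputable def F (t : ℝ) : ℝ := Real.exp (-Real.exp (-(t + Real.eulerMascheroniConstant)))

noncomputable def q (u : ℝ) : ℝ := -Real.log (-Real.log u) - Real.eulerMascheroniConstant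

lemma q_measurable : Measurable q :=
  ((Real.measurable_log.comp Real.measurable_log.neg).neg).sub measurable_const

lemma F_pos (t : ℝ) : 0 < F t := Real.exp_pos _

lemma F_lt_one (t : ℝ) : F t < 1 :=
  Real.exp_lt_one_iff.2 (neg_neg_iff_pos.2 (Real.exp_pos _))

lemma F_continuous : Continuous F := by unfold F; fun_prop

lemma q_le_iff {u : ℝ} (hu : u ∈ Ioo (0:ℝ) 1) (t : ℝ) : q u ≤ t ↔ u ≤ F t := by
  have hlogu : Real.log u < 0 := Real.log_neg hu.1 hu.2
  have hpos : 0 < -Real.log u := by linarith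
  rw [q, sub_le_iff_le_add, neg_le, Real.le_log_iff_exp_le hpos]
  constructor
  · intro h
    exact (Real.log_le_iff_le_exp hu.1).mp (by linarith)
  · intro h
    have := (Real.log_le_iff_le_exp hu.1).mpr h
    linarith

noncomputable def nu : Measure ℝ := Measure.map q (volume.restrict (Ioo (0:ℝ) 1))

lemma q_preimage_Iic (t : ℝ) : q ⁻¹' (Iic t) ∩ Ioo 0 1 = Ioc 0 (F t) := by
  ext u
  simp only [mem_inter_iff, mem_preimage, mem_Iic, mem_Ioo, mem_Ioc]
  constructor
  · rintro ⟨hq, hu⟩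
    exact ⟨hu.1, (q_le_iff hu t).mp hq⟩
  · rintro ⟨hu0, huF⟩
    have hu : u ∈ Ioo (0:ℝ) 1 := ⟨hu0, lt_of_le_of_lt huF (F_lt_one t)⟩
    exact ⟨(q_le_iff hu t).mpr huF, hu.1, hu.2⟩

lemma nu_Iic (t : ℝ) : nu (Iic t) = ENNReal.ofReal (F t) := by
  rw [nu, Measure.map_apply q_measurable measurableSet_Iic,
    Measure.restrict_apply (q_measurable measurableSet_Iic), q_preimage_Iic,
    Real.volume_Ioc, sub_zero]

instance : IsProbabilityMeasure nu := by
  constructor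
  rw [nu, Measure.map_apply q_measurable MeasurableSet.univ, Set.preimage_univ,
    Measure.restrict_apply MeasurableSet.univ, Set.univ_inter, Real.volume_Ioo, sub_zero,
    ENNReal.ofReal_one]

lemma lintegral_nu (g : ℝ → ENNReal) (hg : Measurable g) :
    ∫⁻ t, g t ∂nu = ∫⁻ u in Ioo (0:ℝ) 1, g (q u) := by
  rw [nu, lintegral_map hg q_measurable]

lemma key_integral (S : ℝ) (hS : 0 ≤ S) :
    ∫⁻ u in Ioo (0:ℝ) 1, ENNReal.ofReal (u ^ S) = ENNReal.ofReal (1 / (S + 1)) := by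
  have hcont : Continuous fun u : ℝ => u ^ S :=
    continuous_iff_continuousAt.2 fun x => Real.continuousAt_rpow_const x S (Or.inr hS)
  have hint : IntegrableOn (fun u : ℝ => u ^ S) (Ioo 0 1) :=
    (hcont.integrableOn_Icc (a := 0) (b := 1)).mono_set Ioo_subset_Icc_self
  have hnn : 0 ≤ᵐ[volume.restrict (Ioo (0:ℝ) 1)] fun u : ℝ => u ^ S :=
    (ae_restrict_mem measurableSet_Ioo).mono fun u hu => Real.rpow_nonneg hu.1.le _
  rw [← ofReal_integral_eq_lintegral_ofReal hint hnn, ← integral_Ioc_eq_integral_Ioo,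
    ← intervalIntegral.integral_of_le zero_le_one, integral_rpow (Or.inl (by linarith)),
    Real.one_rpow, Real.zero_rpow (by linarith), sub_zero]

lemma F_q_add {u : ℝ} (hu : u ∈ Ioo (0:ℝ) 1) (b : ℝ) :
    F (q u + b) = u ^ Real.exp (-b) := by
  have hlogu : Real.log u < 0 := Real.log_neg hu.1 hu.2
  have hpos : 0 < -Real.log u := by linarith
  rw [F, q, Real.rpow_def_of_pos hu.1]
  congr 1
  have : -(-Real.log (-Real.log u) - Real.eulerMascheroniConstant + b
      + Real.eulerMascheroniConstant) = Real.log (-Real.log u) + (-b) := by ring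
  rw [this, Real.exp_add, Real.exp_log hpos]
  ring
end GumbelAux

open GumbelAux

/-- **Gumbel-max trick.** If `ε y`, for `y` in a finite nonempty set `Y`, are i.i.d.
random variables with the zero-mean Gumbel CDF `F t = exp (-exp (-(t + c)))`
(`c` the Euler–Mascheroni constant), then the probability that `y` maximizes
`θ y + ε y` equals `exp (θ y) / ∑ y', exp (θ y')`. -/
theorem gumbel_max_trick {Y : Type*} [Fintype Y] [Nonempty Y]
    {Ω : Type*} [MeasurableSpace Ω] (μ : Measure Ω) [IsProbabilityMeasure μ]
    (θ : Y → ℝ) (ε : Y → Ω → ℝ) (hmeas : ∀ y, Measurable (ε y))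
    (hindep : ProbabilityTheory.iIndepFun ε μ)
    (hcdf : ∀ y t, μ {ω | ε y ω ≤ t} =
      ENNReal.ofReal (Real.exp (-Real.exp (-(t + Real.eulerMascheroniConstant)))))
    (y : Y) :
    μ {ω | ∀ y', θ y' + ε y' ω ≤ θ y + ε y ω} =
      ENNReal.ofReal (Real.exp (θ y) / ∑ y', Real.exp (θ y')) := by
  classical
  -- law of each coordinate
  have hlaw : ∀ y', Measure.map (ε y') μ = nu := by
    intro y'
    haveI : IsProbabilityMeasure (Measure.map (ε y') μ) :=
      Measure.isProbabilityMeasure_map (hmeas y').aemeasurable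
    refine Measure.ext_of_Iic _ _ fun t => ?_
    rw [Measure.map_apply (hmeas y') measurableSet_Iic, nu_Iic]
    exact hcdf y' t
  -- joint law
  have hjm : Measurable (fun ω (i : Y) => ε i ω) := measurable_pi_lambda _ hmeas
  have hjoint : Measure.map (fun ω (i : Y) => ε i ω) μ = Measure.pi (fun _ : Y => nu) := by
    symm
    apply Measure.pi_eq
    intro s hs
    rw [Measure.map_apply hjm (MeasurableSet.univ_pi hs)]
    have hpre : (fun ω (i : Y) => ε i ω) ⁻¹' (Set.pi Set.univ s)
        = ⋂ i ∈ Finset.univ, ε i ⁻¹' s i := by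
      ext ω; simp [Set.mem_pi]
    rw [hpre, hindep.measure_inter_preimage_eq_mul Finset.univ (fun i _ => hs i)]
    refine Finset.prod_congr rfl fun i _ => ?_
    rw [← Measure.map_apply (hmeas i) (hs i), hlaw i]
  -- the event as a preimage
  set a : Y → ℝ := fun y' => θ y - θ y' with ha
  set A : Set (Y → ℝ) := {x | ∀ y', x y' ≤ x y + a y'} with hA
  have hevent : {ω | ∀ y', θ y' + ε y' ω ≤ θ y + ε y ω} = (fun ω (i : Y) => ε i ω) ⁻¹' A := by
    ext ω
    simp only [Set.mem_setOf_eq, Set.mem_preimage, hA, ha]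
    constructor <;> intro h y' <;> have := h y' <;> simp only [ha] at * <;> linarith
  have hAmeas : MeasurableSet A := by
    have : A = ⋂ y', {x : Y → ℝ | x y' ≤ x y + a y'} := by ext x; simp [hA]
    rw [this]
    exact MeasurableSet.iInter fun y' =>
      measurableSet_le (measurable_pi_apply y') ((measurable_pi_apply y).add_const _)
  rw [hevent, ← Measure.map_apply hjm hAmeas, hjoint]
  -- split off coordinate y
  set p : Y → Prop := fun i => i = y with hp
  letI hdec : DecidablePred p := fun i => Classical.propDecidable _
  letI : Unique {i : Y // p i} := ⟨⟨⟨y, rfl⟩⟩, fun a => Subtype.ext a.2⟩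
  letI : Fintype {i : Y // p i} := Subtype.fintype p
  letI : Fintype {i : Y // ¬ p i} := Subtype.fintype _
  set B : Set ((∀ _ : {i // p i}, ℝ) × (∀ _ : {i // ¬ p i}, ℝ)) :=
    {z | ∀ i : {i // ¬ p i}, z.2 i ≤ z.1 (default : {i : Y // p i}) + a i} with hB
  have hBmeas : MeasurableSet B := by
    have : B = ⋂ i : {i // ¬ p i}, {z : (∀ _ : {i // p i}, ℝ) × (∀ _ : {i // ¬ p i}, ℝ) |
        z.2 i ≤ z.1 (default : {i : Y // p i}) + a i} := by ext z; simp [hB]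
    rw [this]
    exact MeasurableSet.iInter fun i => measurableSet_le (by fun_prop) (by fun_prop)
  have hpreB : (MeasurableEquiv.piEquivPiSubtypeProd (fun _ : Y => ℝ) p) ⁻¹' B = A := by
    ext x
    simp only [Set.mem_preimage, Set.mem_setOf_eq, hA, hB]
    constructor
    · intro hx y'
      by_cases hy' : p y'
      · have hyy : y' = y := hy'
        subst hyy
        simp only [ha]
        linarith
      · exact hx ⟨y', hy'⟩
    · intro hx i
      exact hx i
  have h1 : Measure.pi (fun _ : Y => nu) A
      = ((Measure.pi fun _ : {i // p i} => nu).prod (Measure.pi fun _ : {i // ¬ p i} => nu)) B := by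
    rw [← hpreB]
    exact (measurePreserving_piEquivPiSubtypeProd (fun _ : Y => nu) p).measure_preimage
      hBmeas.nullMeasurableSet
  -- the inner function
  set G : ℝ → ENNReal := fun t =>
    ENNReal.ofReal (∏ i : {i // ¬ p i}, F (t + a i)) with hG
  have hGmeas : Measurable G := by
    apply Measurable.ennreal_ofReal
    exact (continuous_finset_prod _ fun i _ =>
      F_continuous.comp (continuous_id.add continuous_const)).measurable
  have h2 : ((Measure.pi fun _ : {i // p i} => nu).prod
        (Measure.pi fun _ : {i // ¬ p i} => nu)) B
      = ∫⁻ w, G (w (default : {i : Y // p i})) ∂(Measure.pi fun _ : {i // p i} => nu) := by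
    rw [Measure.prod_apply hBmeas]
    refine lintegral_congr fun w => ?_
    have hset : (Prod.mk w ⁻¹' B)
        = Set.pi Set.univ (fun i : {i // ¬ p i} => Iic (w (default : {i : Y // p i}) + a i)) := by
      ext z; simp [hB, Set.mem_pi, Pi.le_def]
    rw [hset, Measure.pi_pi]
    simp_rw [nu_Iic]
    simp only [hG]
    exact (ENNReal.ofReal_prod_of_nonneg fun i _ => (F_pos _).le).symm
  have h3 : ∫⁻ w, G (w (default : {i : Y // p i})) ∂(Measure.pi fun _ : {i // p i} => nu)
      = ∫⁻ t, G t ∂nu := by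
    have hpu := (measurePreserving_piUnique (fun _ : {i : Y // p i} => nu)).lintegral_comp hGmeas
    simp only [MeasurableEquiv.piUnique_apply] at hpu
    exact hpu
  set S : ℝ := ∑ i : {i // ¬ p i}, Real.exp (θ i - θ y) with hS
  have hSnn : 0 ≤ S := Finset.sum_nonneg fun i _ => (Real.exp_pos _).le
  have h4 : ∫⁻ t, G t ∂nu = ∫⁻ u in Ioo (0:ℝ) 1, ENNReal.ofReal (u ^ S) := by
    rw [lintegral_nu G hGmeas]
    refine setLIntegral_congr_fun measurableSet_Ioo (fun u hu => ?_)
    simp only [hG]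
    congr 1
    calc ∏ i : {i // ¬ p i}, F (q u + a i)
        = ∏ i : {i // ¬ p i}, u ^ Real.exp (θ i - θ y) := by
          refine Finset.prod_congr rfl fun i _ => ?_
          rw [F_q_add hu (a i)]
          congr 1
          simp only [ha]
          ring
      _ = u ^ S := by rw [hS, Real.rpow_sum_of_pos hu.1]
  have h5 := key_integral S hSnn
  rw [h1, h2, h3, h4, h5]
  -- final arithmetic
  congr 1
  have hsum : S + 1 = (∑ y', Real.exp (θ y')) / Real.exp (θ y) := by
    have hsplit := Fintype.sum_subtype_add_sum_subtype p (fun i => Real.exp (θ i - θ y))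
    have hone : (∑ i : {i // p i}, Real.exp (θ i - θ y)) = 1 := by
      rw [Fintype.sum_unique]
      have hd : ((default : {i : Y // p i}) : Y) = y := rfl
      rw [hd, sub_self, Real.exp_zero]
    have hall : (∑ i : Y, Real.exp (θ i - θ y))
        = (∑ y', Real.exp (θ y')) / Real.exp (θ y) := by
      simp_rw [Real.exp_sub]
      rw [← Finset.sum_div]
    rw [← hall, ← hsplit, hone]
    ring
  rw [hsum, one_div_div]
end

section
/- Let ε₁,...,εₙ be i.i.d. standard Gumbel random variables (CDF F(t)=exp(−exp(−t))) and a₁,...,aₙ ∈ ℝ. Then max_i (a_i + ε_i) has the Gumbel distribution with CDF t ↦ exp(−exp(−(t − log Σ_i exp(a_i)))). -/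
open MeasureTheory Real Finset

/-- **Max-stability of the Gumbel distribution.** If `ε 1, ..., ε n` are i.i.d.
standard Gumbel (CDF `exp (-exp (-t))`) and `a i ∈ ℝ`, then `max_i (a i + ε i)`
is Gumbel with CDF `t ↦ exp (-exp (-(t - log (∑ i, exp (a i)))))`. -/
theorem gumbel_max_stability {n : ℕ} (hn : 0 < n)
    {Ω : Type*} [MeasurableSpace Ω] (μ : Measure Ω) [IsProbabilityMeasure μ]
    (a : Fin n → ℝ) (ε : Fin n → Ω → ℝ) (hmeas : ∀ i, Measurable (ε i))
    (hindep : ProbabilityTheory.iIndepFun ε μ)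
    (hcdf : ∀ i t, μ {ω | ε i ω ≤ t} = ENNReal.ofReal (Real.exp (-Real.exp (-t))))
    (t : ℝ) :
    μ {ω | (Finset.univ.sup' (Finset.univ_nonempty_iff.mpr ⟨⟨0, hn⟩⟩)
        fun i => a i + ε i ω) ≤ t} =
      ENNReal.ofReal (Real.exp (-Real.exp (-(t - Real.log (∑ i, Real.exp (a i)))))) := by
  have hset : {ω | (Finset.univ.sup' (Finset.univ_nonempty_iff.mpr ⟨⟨0, hn⟩⟩)
      fun i => a i + ε i ω) ≤ t} = ⋂ i, {ω | ε i ω ≤ t - a i} := by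
    ext ω
    simp only [Set.mem_setOf_eq, Set.mem_iInter, Finset.sup'_le_iff, Finset.mem_univ,
      forall_true_left]
    constructor <;> intro h i <;> [skip; skip] <;> (have := h i; try intro _) <;> linarith [h i]
  rw [hset, hindep.meas_iInter (s := fun i => {ω | ε i ω ≤ t - a i})
    (fun i => ⟨Set.Iic (t - a i), measurableSet_Iic, rfl⟩)]
  rw [Finset.prod_congr rfl (fun i _ => hcdf i (t - a i))]
  rw [← ENNReal.ofReal_prod_of_nonneg (fun i _ => (Real.exp_pos _).le)]
  congr 1
  rw [← Real.exp_sum]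
  congr 1
  have hS : (0:ℝ) < ∑ i, Real.exp (a i) := Finset.sum_pos (fun i _ => Real.exp_pos _)
    ⟨⟨0, hn⟩, Finset.mem_univ _⟩
  have key : Real.exp (-(t - Real.log (∑ i, Real.exp (a i)))) = ∑ i, Real.exp (-(t - a i)) := by
    rw [neg_sub, Real.exp_sub, Real.exp_log hS, Finset.sum_div]
    exact Finset.sum_congr rfl fun i _ => by rw [neg_sub, Real.exp_sub]
  rw [key, ← Finset.sum_neg_distrib]
end

section
/- Let ε₁,...,εₙ be i.i.d. standard Gumbel random variables and a₁,...,aₙ ∈ ℝ. Then the random index argmax_i (a_i + ε_i) and the random value max_i (a_i + ε_i) are independent. -/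
open MeasureTheory Real Finset Set Filter

lemma gumbel_hasDerivAt (C : ℝ) (hC : C ≠ 0) (x : ℝ) :
    HasDerivAt (fun x => Real.exp (-(C * Real.exp (-x))) / C)
      (Real.exp (-x) * Real.exp (-(C * Real.exp (-x)))) x := by
  have h1 : HasDerivAt (fun x : ℝ => -(C * Real.exp (-x)))
      (C * Real.exp (-x)) x := by
    have := (((hasDerivAt_id x).neg).exp.const_mul C).neg
    simp only [Pi.neg_def, Pi.neg_apply, id] at this
    refine this.congr_deriv ?_
    ring
  have h2 := (h1.exp).div_const C
  refine h2.congr_deriv ?_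
  field_simp

lemma gumbel_tendsto_bot (C : ℝ) (hC : 0 < C) :
    Tendsto (fun x => Real.exp (-(C * Real.exp (-x))) / C) atBot (nhds 0) := by
  have h1 : Tendsto (fun x : ℝ => -(C * Real.exp (-x))) atBot atBot := by
    apply Filter.tendsto_neg_atTop_atBot.comp
    exact (Real.tendsto_exp_atTop.comp tendsto_neg_atBot_atTop).const_mul_atTop hC
  have := (Real.tendsto_exp_atBot.comp h1).div_const C
  simpa using this

lemma gumbel_integrableOn (C : ℝ) (hC : 0 < C) (u : ℝ) :
    IntegrableOn (fun x => Real.exp (-x) * Real.exp (-(C * Real.exp (-x)))) (Iic u) := by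
  apply integrableOn_Iic_of_intervalIntegral_norm_bounded (1 / C) u
    (a := fun n : ℕ => -(n : ℝ)) (l := atTop)
  · intro i
    apply Continuous.integrableOn_Ioc
    continuity
  · exact tendsto_neg_atBot_iff.mpr tendsto_natCast_atTop_atTop
  · filter_upwards with k
    have hpos : ∀ x : ℝ, 0 ≤ Real.exp (-x) * Real.exp (-(C * Real.exp (-x))) := fun x =>
      mul_nonneg (Real.exp_nonneg _) (Real.exp_nonneg _)
    have heq : (∫ x in (-(k:ℝ))..u, ‖Real.exp (-x) * Real.exp (-(C * Real.exp (-x)))‖)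
        = ∫ x in (-(k:ℝ))..u, Real.exp (-x) * Real.exp (-(C * Real.exp (-x))) := by
      congr 1; ext x; exact abs_of_nonneg (hpos x)
    rw [heq]
    rcases le_or_gt (-(k:ℝ)) u with h | h
    · rw [intervalIntegral.integral_eq_sub_of_hasDerivAt
        (fun x _ => gumbel_hasDerivAt C hC.ne' x)
        (by apply Continuous.intervalIntegrable; continuity)]
      have h1 : Real.exp (-(C * Real.exp (-u))) ≤ 1 :=
        Real.exp_le_one_iff.mpr (neg_nonpos.mpr (by positivity))
      have h2 : 0 ≤ Real.exp (-(C * Real.exp (-(-(k:ℝ))))) / C := by positivity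
      calc Real.exp (-(C * Real.exp (-u))) / C - Real.exp (-(C * Real.exp (-(-(k:ℝ))))) / C
          ≤ Real.exp (-(C * Real.exp (-u))) / C := by linarith
        _ ≤ 1 / C := by
            exact (div_le_div_iff_of_pos_right hC).mpr h1
    · rw [intervalIntegral.integral_of_ge h.le]
      have : 0 ≤ ∫ x in Ioc u (-(k:ℝ)), Real.exp (-x) * Real.exp (-(C * Real.exp (-x))) :=
        setIntegral_nonneg measurableSet_Ioc (fun x _ => hpos x)
      have h3 : 0 ≤ 1 / C := by positivity
      linarith

lemma gumbel_int (C : ℝ) (hC : 0 < C) (u : ℝ) :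
    ∫⁻ x in Iic u, ENNReal.ofReal (Real.exp (-x) * Real.exp (-(C * Real.exp (-x)))) =
      ENNReal.ofReal (Real.exp (-(C * Real.exp (-u))) / C) := by
  rw [← ofReal_integral_eq_lintegral_ofReal (gumbel_integrableOn C hC u)
    (Filter.Eventually.of_forall fun x => by positivity)]
  congr 1
  rw [integral_Iic_of_hasDerivAt_of_tendsto'
    (fun x _ => gumbel_hasDerivAt C hC.ne' x)
    (gumbel_integrableOn C hC u) (gumbel_tendsto_bot C hC)]
  ring

lemma gumbel_density (ν : Measure ℝ) [IsProbabilityMeasure ν]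
    (h : ∀ s, ν (Iic s) = ENNReal.ofReal (Real.exp (-Real.exp (-s)))) :
    ν = volume.withDensity
      (fun x => ENNReal.ofReal (Real.exp (-x) * Real.exp (-(1 * Real.exp (-x))))) := by
  apply MeasureTheory.Measure.ext_of_Iic
  intro s
  rw [h s, withDensity_apply _ measurableSet_Iic, gumbel_int 1 one_pos s]
  norm_num

lemma joint_law {n : ℕ} {Ω : Type*} [MeasurableSpace Ω] (μ : Measure Ω) [IsProbabilityMeasure μ]
    (ε : Fin n → Ω → ℝ) (hmeas : ∀ i, Measurable (ε i))
    (hindep : ProbabilityTheory.iIndepFun (m := fun _ => (inferInstance : MeasurableSpace ℝ)) ε μ) :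
    μ.map (fun ω j => ε j ω) = Measure.pi (fun j => μ.map (ε j)) := by
  have hΦ : Measurable (fun ω j => ε j ω) := measurable_pi_lambda _ hmeas
  haveI : ∀ j, IsProbabilityMeasure (μ.map (ε j)) := fun j =>
    Measure.isProbabilityMeasure_map (hmeas j).aemeasurable
  symm
  apply Measure.pi_eq
  intro s hs
  rw [Measure.map_apply hΦ (MeasurableSet.univ_pi hs)]
  have hpre : (fun ω j => ε j ω) ⁻¹' Set.pi Set.univ s = ⋂ j ∈ Finset.univ, ε j ⁻¹' s j := by
    ext ω; simp [Set.mem_pi]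
  rw [hpre, hindep.measure_inter_preimage_eq_mul Finset.univ (fun j _ => hs j)]
  exact Finset.prod_congr rfl fun j _ => (Measure.map_apply (hmeas j) (hs j)).symm

lemma gumbel_joint {n : ℕ} {Ω : Type*} [MeasurableSpace Ω] (μ : Measure Ω)
    [IsProbabilityMeasure μ]
    (a : Fin (n+1) → ℝ) (ε : Fin (n+1) → Ω → ℝ) (hmeas : ∀ i, Measurable (ε i))
    (hindep : ProbabilityTheory.iIndepFun (m := fun _ => (inferInstance : MeasurableSpace ℝ)) ε μ)
    (hcdf : ∀ i t, μ {ω | ε i ω ≤ t} = ENNReal.ofReal (Real.exp (-Real.exp (-t))))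
    (i : Fin (n+1)) (s : ℝ) :
    μ {ω | (∀ j, a j + ε j ω ≤ a i + ε i ω) ∧ a i + ε i ω ≤ s} =
      ENNReal.ofReal (Real.exp (-((∑ j, Real.exp (a j - a i)) * Real.exp (-(s - a i)))) /
        (∑ j, Real.exp (a j - a i))) := by
  set C : ℝ := ∑ j, Real.exp (a j - a i) with hCdef
  have hC : 0 < C := Finset.sum_pos (fun j _ => Real.exp_pos _) Finset.univ_nonempty
  set ν : Fin (n+1) → Measure ℝ := fun j => μ.map (ε j) with hνdef
  haveI : ∀ j, IsProbabilityMeasure (ν j) := fun j =>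
    Measure.isProbabilityMeasure_map (hmeas j).aemeasurable
  have hνIic : ∀ j r, ν j (Iic r) = ENNReal.ofReal (Real.exp (-Real.exp (-r))) := by
    intro j r
    rw [hνdef]
    rw [Measure.map_apply (hmeas j) measurableSet_Iic]
    exact hcdf j r
  have hΦ : Measurable (fun ω (j : Fin (n+1)) => ε j ω) := measurable_pi_lambda _ hmeas
  set A : Set (ℝ × (Fin n → ℝ)) :=
    {p | (∀ k, a (i.succAbove k) + p.2 k ≤ a i + p.1) ∧ a i + p.1 ≤ s} with hAdef
  have hA : MeasurableSet A := by
    have h1 : A = (⋂ k, {p : ℝ × (Fin n → ℝ) | a (i.succAbove k) + p.2 k ≤ a i + p.1}) ∩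
        {p : ℝ × (Fin n → ℝ) | a i + p.1 ≤ s} := by
      ext p; simp [hAdef, forall_and_left]  -- may fix
    rw [h1]
    refine MeasurableSet.inter (MeasurableSet.iInter fun k => measurableSet_le
        (((measurable_pi_apply k).comp measurable_snd).const_add _)
        (measurable_fst.const_add _))
      (measurableSet_le (measurable_fst.const_add _) measurable_const)
  set e := MeasurableEquiv.piFinSuccAbove (fun _ : Fin (n+1) => ℝ) i with hedef
  have hev : {ω | (∀ j, a j + ε j ω ≤ a i + ε i ω) ∧ a i + ε i ω ≤ s} =
      (fun ω (j : Fin (n+1)) => ε j ω) ⁻¹' (e ⁻¹' A) := by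
    ext ω
    simp only [Set.mem_setOf_eq, Set.mem_preimage, hAdef, hedef,
      MeasurableEquiv.piFinSuccAbove_apply, Fin.removeNth]
    constructor
    · rintro ⟨h1, h2⟩
      exact ⟨fun k => h1 _, h2⟩
    · rintro ⟨h1, h2⟩
      refine ⟨fun j => ?_, h2⟩
      rcases eq_or_ne j i with rfl | hj
      · exact le_rfl
      · obtain ⟨k, rfl⟩ := Fin.exists_succAbove_eq hj
        exact h1 k
  rw [hev, ← Measure.map_apply hΦ (e.measurable hA), joint_law μ ε hmeas hindep]
  rw [(measurePreserving_piFinSuccAbove ν i).measure_preimage hA.nullMeasurableSet]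
  rw [Measure.prod_apply hA]
  have hslice : ∀ x : ℝ, (Measure.pi fun k => ν (i.succAbove k)) (Prod.mk x ⁻¹' A) =
      Set.indicator (Iic (s - a i))
        (fun x => ENNReal.ofReal (Real.exp (-((C - 1) * Real.exp (-x))))) x := by
    intro x
    rcases le_or_gt x (s - a i) with hx | hx
    · rw [Set.indicator_of_mem (Set.mem_Iic.mpr hx)]
      have hset : Prod.mk x ⁻¹' A =
          Set.pi Set.univ (fun k => Iic (a i + x - a (i.succAbove k))) := by
        ext y
        simp only [hAdef, Set.mem_preimage, Set.mem_setOf_eq, Set.mem_pi, Set.mem_univ,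
          Set.mem_Iic, forall_const]
        constructor
        · rintro ⟨h1, _⟩ k; linarith [h1 k]
        · intro h1; exact ⟨fun k => by linarith [h1 k], by linarith⟩
      rw [hset, Measure.pi_pi]
      have : ∀ k, ν (i.succAbove k) (Iic (a i + x - a (i.succAbove k))) =
          ENNReal.ofReal (Real.exp (-(Real.exp (a (i.succAbove k) - a i) * Real.exp (-x)))) := by
        intro k
        rw [hνIic]
        congr 2
        rw [← Real.exp_add]
        ring_nf
      simp_rw [this]
      rw [← ENNReal.ofReal_prod_of_nonneg (fun k _ => (Real.exp_nonneg _))]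
      congr 1
      rw [← Real.exp_sum]
      congr 1
      have hsum : ∑ k, Real.exp (a (i.succAbove k) - a i) = C - 1 := by
        have := Fin.sum_univ_succAbove (fun j => Real.exp (a j - a i)) i
        rw [hCdef]
        rw [this]
        simp
      have hgoal : ∑ k, -(Real.exp (a (i.succAbove k) - a i) * Real.exp (-x)) =
          -((∑ k, Real.exp (a (i.succAbove k) - a i)) * Real.exp (-x)) := by
        rw [Finset.sum_mul, Finset.sum_neg_distrib]
      rw [hgoal, hsum]
    · rw [Set.indicator_of_notMem (by simpa using not_le.mpr hx)]
      have hset : Prod.mk x ⁻¹' A = ∅ := by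
        ext y
        simp only [hAdef, Set.mem_preimage, Set.mem_setOf_eq, Set.mem_empty_iff_false, iff_false]
        rintro ⟨-, h2⟩
        linarith
      simp [hset]
  simp_rw [hslice]
  rw [lintegral_indicator measurableSet_Iic]
  rw [gumbel_density (ν i) (hνIic i)]
  rw [setLIntegral_withDensity_eq_setLIntegral_mul _ (by fun_prop) (by fun_prop)
    measurableSet_Iic]
  have hcomb : ∀ x : ℝ, (ENNReal.ofReal (Real.exp (-x) * Real.exp (-(1 * Real.exp (-x)))) *
      ENNReal.ofReal (Real.exp (-((C - 1) * Real.exp (-x))))) =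
      ENNReal.ofReal (Real.exp (-x) * Real.exp (-(C * Real.exp (-x)))) := by
    intro x
    rw [← ENNReal.ofReal_mul (by positivity)]
    congr 1
    rw [mul_assoc, ← Real.exp_add]
    ring_nf
  simp_rw [Pi.mul_apply, hcomb]
  exact gumbel_int C hC (s - a i)

lemma gumbel_argmax_prob {n : ℕ} {Ω : Type*} [MeasurableSpace Ω] (μ : Measure Ω)
    [IsProbabilityMeasure μ]
    (a : Fin (n+1) → ℝ) (ε : Fin (n+1) → Ω → ℝ) (hmeas : ∀ i, Measurable (ε i))
    (hindep : ProbabilityTheory.iIndepFun (m := fun _ => (inferInstance : MeasurableSpace ℝ)) ε μ)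
    (hcdf : ∀ i t, μ {ω | ε i ω ≤ t} = ENNReal.ofReal (Real.exp (-Real.exp (-t))))
    (i : Fin (n+1)) :
    μ {ω | ∀ j, a j + ε j ω ≤ a i + ε i ω} =
      ENNReal.ofReal (1 / (∑ j, Real.exp (a j - a i))) := by
  set C : ℝ := ∑ j, Real.exp (a j - a i) with hCdef
  have hC : 0 < C := Finset.sum_pos (fun j _ => Real.exp_pos _) Finset.univ_nonempty
  set E : ℕ → Set Ω := fun k =>
    {ω | (∀ j, a j + ε j ω ≤ a i + ε i ω) ∧ a i + ε i ω ≤ (k : ℝ)} with hEdef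
  have hunion : {ω | ∀ j, a j + ε j ω ≤ a i + ε i ω} = ⋃ k, E k := by
    ext ω
    simp only [hEdef, Set.mem_setOf_eq, Set.mem_iUnion]
    constructor
    · intro h
      obtain ⟨k, hk⟩ := exists_nat_ge (a i + ε i ω)
      exact ⟨k, h, hk⟩
    · rintro ⟨k, h, -⟩; exact h
  have hmono : Monotone E := by
    intro k m hkm ω hω
    exact ⟨hω.1, hω.2.trans (by exact_mod_cast hkm)⟩
  have htend := tendsto_measure_iUnion_atTop (μ := μ) hmono
  have hval : ∀ k : ℕ, μ (E k) =
      ENNReal.ofReal (Real.exp (-(C * Real.exp (-((k : ℝ) - a i)))) / C) := fun k =>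
    gumbel_joint μ a ε hmeas hindep hcdf i k
  have htend2 : Tendsto (fun k : ℕ => μ (E k)) atTop (nhds (ENNReal.ofReal (1 / C))) := by
    simp_rw [hval]
    apply ENNReal.tendsto_ofReal
    have h0 : Tendsto (fun k : ℕ => -((k : ℝ) - a i)) atTop atBot := by
      apply Filter.tendsto_neg_atTop_atBot.comp
      exact Filter.tendsto_atTop_add_const_right _ _ tendsto_natCast_atTop_atTop
    have h1 : Tendsto (fun k : ℕ => Real.exp (-((k : ℝ) - a i))) atTop (nhds 0) :=
      Real.tendsto_exp_atBot.comp h0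
    have h2 : Tendsto (fun k : ℕ => -(C * Real.exp (-((k : ℝ) - a i)))) atTop (nhds 0) := by
      have := (h1.const_mul C).neg
      simpa using this
    have h3 := (Real.continuous_exp.tendsto 0).comp h2
    simp only [Real.exp_zero] at h3
    have := h3.div_const C
    simpa using this
  rw [hunion]
  exact tendsto_nhds_unique htend htend2

/-- **Independence of argmax and max for Gumbel perturbations.** If `ε i` are i.i.d.
standard Gumbel and `a i ∈ ℝ`, the random index `argmax_i (a i + ε i)` and the random
value `max_i (a i + ε i)` are independent: the joint probability of the events
`{i is the argmax}` and `{max ≤ t}` factorizes for all `i` and `t`. -/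
theorem gumbel_argmax_max_indep {n : ℕ} (hn : 0 < n)
    {Ω : Type*} [MeasurableSpace Ω] (μ : Measure Ω) [IsProbabilityMeasure μ]
    (a : Fin n → ℝ) (ε : Fin n → Ω → ℝ) (hmeas : ∀ i, Measurable (ε i))
    (hindep : ProbabilityTheory.iIndepFun (m := fun _ => (inferInstance : MeasurableSpace ℝ)) ε μ)
    (hcdf : ∀ i t, μ {ω | ε i ω ≤ t} = ENNReal.ofReal (Real.exp (-Real.exp (-t))))
    (i : Fin n) (t : ℝ) :
    μ ({ω | ∀ j, a j + ε j ω ≤ a i + ε i ω} ∩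
        {ω | (Finset.univ.sup' (Finset.univ_nonempty_iff.mpr ⟨⟨0, hn⟩⟩)
          fun j => a j + ε j ω) ≤ t}) =
      μ {ω | ∀ j, a j + ε j ω ≤ a i + ε i ω} *
        μ {ω | (Finset.univ.sup' (Finset.univ_nonempty_iff.mpr ⟨⟨0, hn⟩⟩)
          fun j => a j + ε j ω) ≤ t} := by
  obtain ⟨m, rfl⟩ : ∃ m, n = m + 1 := ⟨n - 1, (Nat.succ_pred_eq_of_pos hn).symm⟩
  set C : ℝ := ∑ j, Real.exp (a j - a i) with hCdef
  have hC : 0 < C := Finset.sum_pos (fun j _ => Real.exp_pos _) Finset.univ_nonempty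
  -- LHS as joint event
  have hinter : {ω | ∀ j, a j + ε j ω ≤ a i + ε i ω} ∩
      {ω | (Finset.univ.sup' (Finset.univ_nonempty_iff.mpr ⟨⟨0, hn⟩⟩)
        fun j => a j + ε j ω) ≤ t} =
      {ω | (∀ j, a j + ε j ω ≤ a i + ε i ω) ∧ a i + ε i ω ≤ t} := by
    ext ω
    simp only [Set.mem_inter_iff, Set.mem_setOf_eq, Finset.sup'_le_iff, Finset.mem_univ,
      forall_const, true_and]
    constructor
    · rintro ⟨h1, h2⟩; exact ⟨h1, h2 i⟩
    · rintro ⟨h1, h2⟩; exact ⟨h1, fun j => (h1 j).trans h2⟩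
  -- max CDF
  have hmax : μ {ω | (Finset.univ.sup' (Finset.univ_nonempty_iff.mpr ⟨⟨0, hn⟩⟩)
      fun j => a j + ε j ω) ≤ t} =
      ENNReal.ofReal (Real.exp (-(∑ j, Real.exp (-(t - a j))))) := by
    have hset : {ω | (Finset.univ.sup' (Finset.univ_nonempty_iff.mpr ⟨⟨0, hn⟩⟩)
        fun j => a j + ε j ω) ≤ t} = ⋂ j ∈ Finset.univ, ε j ⁻¹' Iic (t - a j) := by
      ext ω
      simp only [Set.mem_setOf_eq, Finset.sup'_le_iff, Finset.mem_univ, forall_const,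
        Set.mem_iInter, Set.mem_preimage, Set.mem_Iic]
      constructor
      · intro h j; linarith [h j]
      · intro h j; linarith [h j]
    rw [hset, hindep.measure_inter_preimage_eq_mul Finset.univ
      (fun j _ => measurableSet_Iic)]
    have hval : ∀ j, μ (ε j ⁻¹' Iic (t - a j)) =
        ENNReal.ofReal (Real.exp (-Real.exp (-(t - a j)))) := fun j => hcdf j (t - a j)
    simp_rw [hval]
    rw [← ENNReal.ofReal_prod_of_nonneg (fun j _ => Real.exp_nonneg _), ← Real.exp_sum]
    congr 2
    rw [← Finset.sum_neg_distrib]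
  rw [hinter, gumbel_joint μ a ε hmeas hindep hcdf i t,
    gumbel_argmax_prob μ a ε hmeas hindep hcdf i, hmax, ← hCdef,
    ← ENNReal.ofReal_mul (by positivity)]
  congr 1
  have hkey : C * Real.exp (-(t - a i)) = ∑ j, Real.exp (-(t - a j)) := by
    rw [hCdef, Finset.sum_mul]
    exact Finset.sum_congr rfl fun j _ => by rw [← Real.exp_add]; ring_nf
  rw [hkey]
  ring
end

section
/- Let Y = Y₁ × ⋯ × Yₙ with each Yⱼ finite and nonempty, let θ : Y → ℝ, and let 𝓑 = {β₁,...,β_m} be pairwise disjoint subsets of {1,...,n}. Perturb θ by ~θ(y) = θ(y) + Σ_{β∈𝓑} ε(y_β), where for each β ∈ 𝓑 and each configuration y_β ∈ ∏_{j∈β} Yⱼ, the ε(y_β) are independent zero-mean Gumbel random variables. Then for every fixed y ∈ Y, the probability that y is a block-coordinate-wise maximum of ~θ over the blocks 𝓑 (i.e., for each β ∈ 𝓑, y_β ∈ argmax_{y'_β} ~θ(y'_β, y_{¬β})) equals ∏_{β∈𝓑} p(y_β | y_{¬β}; θ), where p(y_β | y_{¬β}; θ) = exp(θ(y)) / Σ_{y'_β}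 exp(θ(y'_β, y_{¬β})). -/
open MeasureTheory Real Finset

/-- Replace the coordinates of `y` inside the block `B` by the values given by `z`. -/
def blockUpd {n : ℕ} {Y : Fin n → Type*} (B : Finset (Fin n)) (y : ∀ j, Y j)
    (z : ∀ j : {j // j ∈ B}, Y j.1) : ∀ j, Y j :=
  fun j => if h : j ∈ B then z ⟨j, h⟩ else y j

noncomputable section LPMAux
open Set

lemma lint_exp {b : ℝ} (hb : 0 < b) (a : ℝ) :
    ∫⁻ u in Set.Ioi a, ENNReal.ofReal (Real.exp (-(b * u))) =
      ENNReal.ofReal (Real.exp (-(b * a)) / b) := by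
  have hint : IntegrableOn (fun u => Real.exp (-(b * u))) (Set.Ioi a) := by
    simpa [neg_mul] using exp_neg_integrableOn_Ioi a hb
  rw [← ofReal_integral_eq_lintegral_ofReal hint
    (Filter.Eventually.of_forall fun x => (exp_pos _).le)]
  congr 1
  have hd : ∀ x ∈ Set.Ici a, HasDerivAt (fun u : ℝ => -(Real.exp (-(b*u))/b))
      (Real.exp (-(b*x))) x := by
    intro x _
    have h1 : HasDerivAt (fun u : ℝ => -(b*u)) (-b) x := by
      have h0 := ((hasDerivAt_id x).const_mul b).neg; rw [mul_one] at h0; exact h0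
    have : HasDerivAt (fun u : ℝ => -(Real.exp (-(b*u))/b)) (-(Real.exp (-(b*x)) * -b / b)) x :=
      ((h1.exp).div_const b).neg
    convert this using 1
    field_simp
  have ht : Filter.Tendsto (fun u : ℝ => -(Real.exp (-(b*u))/b)) Filter.atTop (nhds 0) := by
    have : Filter.Tendsto (fun u : ℝ => -(b*u)) Filter.atTop Filter.atBot := by
      simpa [neg_mul] using Filter.tendsto_neg_atBot_iff.mpr (Filter.tendsto_id.const_mul_atTop hb)
    simpa using ((Real.tendsto_exp_atBot.comp this).div_const b).neg
  have := integral_Ioi_of_hasDerivAt_of_tendsto' hd hint ht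
  rw [this]; ring

/-- The Exp(1) measure on ℝ. -/
def expM : Measure ℝ :=
  (MeasureTheory.volume.restrict (Set.Ioi (0:ℝ))).withDensity
    fun u => ENNReal.ofReal (Real.exp (-u))

lemma expM_apply {s : Set ℝ} (hs : MeasurableSet s) :
    expM s = ∫⁻ u in s ∩ Set.Ioi 0, ENNReal.ofReal (Real.exp (-u)) := by
  rw [expM, withDensity_apply _ hs, Measure.restrict_restrict hs]

instance : IsProbabilityMeasure expM := by
  constructor
  rw [expM_apply MeasurableSet.univ]
  simp only [Set.univ_inter]
  have := lint_exp one_pos 0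
  simpa using this

/-- The zero-mean Gumbel measure on ℝ. -/
def gumbel : Measure ℝ :=
  expM.map (fun u => -Real.log u - Real.eulerMascheroniConstant)

lemma measurable_gumbel_map :
    Measurable (fun u : ℝ => -Real.log u - Real.eulerMascheroniConstant) :=
  (Real.measurable_log.neg).sub measurable_const

instance : IsProbabilityMeasure gumbel :=
  Measure.isProbabilityMeasure_map measurable_gumbel_map.aemeasurable

lemma gumbel_Iic (t : ℝ) :
    gumbel (Set.Iic t) =
      ENNReal.ofReal (Real.exp (-Real.exp (-(t + Real.eulerMascheroniConstant)))) := by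
  set c := Real.eulerMascheroniConstant
  rw [gumbel, Measure.map_apply measurable_gumbel_map measurableSet_Iic,
    expM_apply (measurable_gumbel_map measurableSet_Iic)]
  have hset : (fun u : ℝ => -Real.log u - c) ⁻¹' Set.Iic t ∩ Set.Ioi 0 =
      Set.Ici (Real.exp (-(t + c))) ∩ Set.Ioi 0 := by
    ext u
    simp only [Set.mem_inter_iff, Set.mem_preimage, Set.mem_Iic, Set.mem_Ici, Set.mem_Ioi]
    constructor
    · rintro ⟨h1, h2⟩
      refine ⟨?_, h2⟩
      have : -(t + c) ≤ Real.log u := by linarith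
      calc Real.exp (-(t+c)) ≤ Real.exp (Real.log u) := Real.exp_le_exp.mpr this
        _ = u := Real.exp_log h2
    · rintro ⟨h1, h2⟩
      refine ⟨?_, h2⟩
      have : -(t + c) ≤ Real.log u := by
        rw [← Real.log_exp (-(t+c))]
        exact Real.log_le_log (Real.exp_pos _) h1
      linarith
  rw [hset]
  have h0 : 0 < Real.exp (-(t + c)) := Real.exp_pos _
  have hIci : Set.Ici (Real.exp (-(t + c))) ∩ Set.Ioi (0:ℝ) = Set.Ici (Real.exp (-(t+c))) := by
    apply Set.inter_eq_left.mpr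
    intro u hu; exact lt_of_lt_of_le h0 hu
  rw [hIci, ← MeasureTheory.restrict_Ioi_eq_restrict_Ici]
  have := lint_exp one_pos (Real.exp (-(t+c)))
  simp only [one_mul, div_one] at this
  rw [this]


lemma gumbel_lint {S : ℝ} (hS : 0 ≤ S) :
    ∫⁻ t, ENNReal.ofReal
        (Real.exp (-(S * Real.exp (-(t + Real.eulerMascheroniConstant))))) ∂gumbel =
      ENNReal.ofReal (1 / (1 + S)) := by
  set c := Real.eulerMascheroniConstant
  have hcF : Continuous fun t : ℝ => Real.exp (-(S * Real.exp (-(t + c)))) := by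
    continuity
  have hmeasF : Measurable fun t : ℝ =>
      ENNReal.ofReal (Real.exp (-(S * Real.exp (-(t + c))))) :=
    ENNReal.measurable_ofReal.comp hcF.measurable
  have hdens : Measurable fun u : ℝ => ENNReal.ofReal (Real.exp (-u)) :=
    ENNReal.measurable_ofReal.comp (Real.continuous_exp.comp continuous_neg).measurable
  rw [gumbel, lintegral_map hmeasF measurable_gumbel_map]
  rw [expM, lintegral_withDensity_eq_lintegral_mul _ hdens
    (by exact hmeasF.comp measurable_gumbel_map)]
  have : ∀ u ∈ Set.Ioi (0:ℝ),
      (ENNReal.ofReal (Real.exp (-u)) *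
        ENNReal.ofReal (Real.exp (-(S * Real.exp (-(-Real.log u - c + c)))))) =
      ENNReal.ofReal (Real.exp (-((1 + S) * u))) := by
    intro u hu
    rw [← ENNReal.ofReal_mul (Real.exp_pos _).le, ← Real.exp_add]
    congr 2
    have h1 : -Real.log u - c + c = -Real.log u := by ring
    rw [h1, neg_neg, Real.exp_log hu]
    ring
  rw [show ((fun u : ℝ => ENNReal.ofReal (Real.exp (-u))) * fun a : ℝ =>
        ENNReal.ofReal (Real.exp (-(S * Real.exp (-(-Real.log a - c + c)))))) =
      fun u : ℝ => ENNReal.ofReal (Real.exp (-u)) *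
        ENNReal.ofReal (Real.exp (-(S * Real.exp (-(-Real.log u - c + c))))) from rfl]
  rw [setLIntegral_congr_fun measurableSet_Ioi this]
  have h1S : (0:ℝ) < 1 + S := by linarith
  have := lint_exp h1S 0
  simpa using this

lemma block_prob {Z : Type*} [Fintype Z] [Nonempty Z] [DecidableEq Z]
    (a : Z → ℝ) (z₀ : Z) :
    (Measure.pi fun _ : Z => gumbel) {v : Z → ℝ | ∀ z, a z + v z ≤ a z₀ + v z₀} =
      ENNReal.ofReal (Real.exp (a z₀) / ∑ z, Real.exp (a z)) := by
  classical
  set c := Real.eulerMascheroniConstant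
  set p : Z → Prop := fun z => z = z₀ with hp
  haveI : Unique {z // p z} := ⟨⟨⟨z₀, rfl⟩⟩, fun z => Subtype.ext z.2⟩
  set e := MeasurableEquiv.piEquivPiSubtypeProd (fun _ : Z => ℝ) p with he
  have hMP := measurePreserving_piEquivPiSubtypeProd (fun _ : Z => gumbel) p
  set Sset : Set (Z → ℝ) := {v | ∀ z, a z + v z ≤ a z₀ + v z₀} with hSset
  have hSmeas : MeasurableSet Sset := by
    have : Sset = ⋂ z, {v : Z → ℝ | a z + v z ≤ a z₀ + v z₀} := by
      ext v; simp [hSset]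
    rw [this]
    exact MeasurableSet.iInter fun z => measurableSet_le
      (measurable_const.add (measurable_pi_apply z))
      (measurable_const.add (measurable_pi_apply z₀))
  set W : Set ((∀ _ : {z // p z}, ℝ) × (∀ _ : {z // ¬ p z}, ℝ)) := e.symm ⁻¹' Sset with hW
  have hWmeas : MeasurableSet W := e.symm.measurable hSmeas
  have h1 : (Measure.pi fun _ : Z => gumbel) Sset =
      ((Measure.pi fun _ : {z // p z} => gumbel).prod
        (Measure.pi fun _ : {z // ¬ p z} => gumbel)) W := by
    have h2 := ((hMP.symm e).measure_preimage hSmeas.nullMeasurableSet).symm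
    convert h2 using 2
    congr!
  rw [h1, Measure.prod_apply hWmeas]
  set S' : ℝ := ∑ zz : {z // ¬ p z}, Real.exp (a zz.1 - a z₀) with hS'
  have hsect : ∀ x : ∀ _ : {z // p z}, ℝ,
      (Prod.mk x ⁻¹' W) = Set.pi Set.univ
        (fun zz : {z // ¬ p z} => Set.Iic (x ⟨z₀, rfl⟩ + a z₀ - a zz.1)) := by
    intro x
    ext w
    simp only [hW, Set.mem_preimage, hSset, Set.mem_setOf_eq, Set.mem_pi, Set.mem_univ,
      Set.mem_Iic, forall_true_left]
    have happ : ∀ z, (e.symm (x, w)) z = if h : p z then x ⟨z, h⟩ else w ⟨z, h⟩ := by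
      intro z; rfl
    constructor
    · intro h zz
      have := h zz.1
      rw [happ zz.1, happ z₀, dif_neg zz.2, dif_pos rfl] at this
      linarith
    · intro h z
      rw [happ z, happ z₀, dif_pos rfl]
      by_cases hz : p z
      · rw [dif_pos hz]
        have : z = z₀ := hz
        subst this
        simp
      · rw [dif_neg hz]
        have := h ⟨z, hz⟩
        linarith
  have hinner : ∀ x : ∀ _ : {z // p z}, ℝ,
      (Measure.pi fun _ : {z // ¬ p z} => gumbel) (Prod.mk x ⁻¹' W) =
        ENNReal.ofReal (Real.exp (-(S' * Real.exp (-(x ⟨z₀, rfl⟩ + c))))) := by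
    intro x
    rw [hsect x, Measure.pi_pi]
    simp only [gumbel_Iic]
    rw [← ENNReal.ofReal_prod_of_nonneg (fun _ _ => (Real.exp_pos _).le)]
    congr 1
    rw [← Real.exp_sum]
    congr 1
    rw [hS', Finset.sum_mul, ← Finset.sum_neg_distrib]
    apply Finset.sum_congr rfl
    intro zz _
    rw [← Real.exp_add]
    exact congrArg (fun t => -Real.exp t) (by ring)
  rw [lintegral_congr fun x => hinner x]
  have hG : Measurable fun t : ℝ => ENNReal.ofReal (Real.exp (-(S' * Real.exp (-(t + c))))) := by
    apply ENNReal.measurable_ofReal.comp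
    exact (Real.continuous_exp.comp (((continuous_const.mul
      (Real.continuous_exp.comp ((continuous_id.add continuous_const).neg))).neg))).measurable
  have hfe := measurePreserving_funUnique (gumbel) {z // p z}
  have hx0 : ∀ x : ∀ _ : {z // p z}, ℝ, x ⟨z₀, rfl⟩ = MeasurableEquiv.funUnique {z // p z} ℝ x := fun x => by
    rw [MeasurableEquiv.funUnique_apply]
    exact congrArg x (Subsingleton.elim _ _)
  calc ∫⁻ x, ENNReal.ofReal (Real.exp (-(S' * Real.exp (-(x ⟨z₀, rfl⟩ + c)))))
        ∂(Measure.pi fun _ : {z // p z} => gumbel)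
      = ∫⁻ t, ENNReal.ofReal (Real.exp (-(S' * Real.exp (-(t + c))))) ∂gumbel := by
        rw [← hfe.lintegral_comp hG]
        simp only [hx0]
        congr!
    _ = ENNReal.ofReal (1 / (1 + S')) := by
        apply gumbel_lint
        exact Finset.sum_nonneg fun _ _ => (Real.exp_pos _).le
    _ = ENNReal.ofReal (Real.exp (a z₀) / ∑ z, Real.exp (a z)) := by
        congr 1
        have hsum : (∑ z, Real.exp (a z)) = Real.exp (a z₀) * (1 + S') := by
          rw [mul_add, mul_one, hS', Finset.mul_sum]
          have : ∀ zz : {z // ¬ p z}, Real.exp (a z₀) * Real.exp (a zz.1 - a z₀) =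
              Real.exp (a zz.1) := by
            intro zz; rw [← Real.exp_add]; congr 1; ring
          rw [Finset.sum_congr rfl fun zz _ => this zz]
          rw [← Finset.sum_subtype (Finset.univ.erase z₀)
            (fun z => by simp [hp, Finset.mem_erase]) (fun z => Real.exp (a z))]
          exact (Finset.add_sum_erase _ _ (Finset.mem_univ z₀)).symm
        rw [hsum]
        have h1S : (0:ℝ) < 1 + S' := by
          have : 0 ≤ S' := Finset.sum_nonneg fun _ _ => (Real.exp_pos _).le
          linarith
        field_simp

open ProbabilityTheory in
lemma law_eq_gumbel {Ω : Type*} [MeasurableSpace Ω] (μ : Measure Ω) [IsProbabilityMeasure μ]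
    (X : Ω → ℝ) (hX : Measurable X)
    (hcdf : ∀ t, μ {ω | X ω ≤ t} =
      ENNReal.ofReal (Real.exp (-Real.exp (-(t + Real.eulerMascheroniConstant))))) :
    μ.map X = gumbel := by
  haveI := Measure.isProbabilityMeasure_map (μ := μ) hX.aemeasurable
  refine Measure.ext_of_Iic (μ.map X) gumbel fun t => ?_
  rw [Measure.map_apply hX measurableSet_Iic, gumbel_Iic]
  exact hcdf t

open ProbabilityTheory in
lemma map_pi {ι : Type*} [Fintype ι] {Ω : Type*} [MeasurableSpace Ω] (μ : Measure Ω)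
    [IsProbabilityMeasure μ] (X : ι → Ω → ℝ) (hX : ∀ i, Measurable (X i))
    (hlaw : ∀ i, μ.map (X i) = gumbel)
    (hind : iIndepFun X μ) :
    μ.map (fun ω i => X i ω) = Measure.pi (fun _ => gumbel) := by
  refine (Measure.pi_eq fun s hs => ?_).symm
  rw [Measure.map_apply (measurable_pi_lambda _ hX) (MeasurableSet.univ_pi hs)]
  have hpre : (fun ω i => X i ω) ⁻¹' Set.pi Set.univ s = ⋂ i, X i ⁻¹' s i := by
    ext ω; simp [Set.mem_pi]
  rw [hpre, hind.meas_iInter fun i => ⟨s i, hs i, rfl⟩]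
  exact Finset.prod_congr rfl fun i _ => by
    rw [← hlaw i, Measure.map_apply (hX i) (hs i)]

open ProbabilityTheory in
lemma iIndepFun_sub {ι ι' : Type*} {Ω : Type*} [MeasurableSpace Ω] {μ : Measure Ω}
    (u : ι' → ι) (hu : Function.Injective u) {f : ι → Ω → ℝ}
    (h : iIndepFun f μ) :
    iIndepFun (fun i' => f (u i')) μ := by
  classical
  rw [iIndepFun_iff_measure_inter_preimage_eq_mul] at h ⊢
  intro S' sets' hsets'
  set sets : ι → Set ℝ := Function.extend u sets' (fun _ => Set.univ) with hsetsdef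
  have hext : ∀ i', sets (u i') = sets' i' := fun i' => hu.extend_apply _ _ _
  have := h (S'.map ⟨u, hu⟩) (sets := sets) ?_
  · have hL : (⋂ i ∈ S'.map ⟨u, hu⟩, f i ⁻¹' sets i) = ⋂ i' ∈ S', f (u i') ⁻¹' sets' i' := by
      ext ω
      simp only [Set.mem_iInter, Finset.mem_map, Function.Embedding.coeFn_mk]
      constructor
      · intro hh i' hi'
        have := hh (u i') ⟨i', hi', rfl⟩
        rwa [hext] at this
      · rintro hh i ⟨i', hi', rfl⟩
        rw [hext]
        exact hh i' hi'
    have hR : ∏ i ∈ S'.map ⟨u, hu⟩, μ (f i ⁻¹' sets i) =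
        ∏ i' ∈ S', μ (f (u i') ⁻¹' sets' i') := by
      rw [Finset.prod_map]
      exact Finset.prod_congr rfl fun i' _ => by simp [hext]
    rw [hL, hR] at this
    exact this
  · rintro i hi
    rw [Finset.mem_map] at hi
    obtain ⟨i', hi', rfl⟩ := hi
    rw [Function.Embedding.coeFn_mk, hext]
    exact hsets' i' hi'

open ProbabilityTheory in
lemma grouped_indep_meas {K : Type*} [Fintype K] {Z : K → Type*} [∀ k, Fintype (Z k)]
    {Ω : Type*} [mΩ : MeasurableSpace Ω] {μ : Measure Ω} [IsProbabilityMeasure μ]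
    (X : ∀ k, Z k → Ω → ℝ) (hX : ∀ k z, Measurable (X k z))
    (hind : iIndepFun (fun (p : Σ k, Z k) => X p.1 p.2) μ)
    (B : ∀ k, Set (Z k → ℝ)) (hB : ∀ k, MeasurableSet (B k)) :
    μ (⋂ k, (fun ω z => X k z ω) ⁻¹' B k) = ∏ k, μ ((fun ω z => X k z ω) ⁻¹' B k) := by
  classical
  set g : ∀ k, Ω → (Z k → ℝ) := fun k ω z => X k z ω with hg
  have hgmeas : ∀ k, Measurable (g k) := fun k => measurable_pi_lambda _ (hX k)
  -- π-systems of box preimages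
  set boxes : ∀ k, Set (Set (Z k → ℝ)) := fun k =>
    Set.pi Set.univ '' Set.pi Set.univ (fun _ : Z k => {s : Set ℝ | MeasurableSet s}) with hboxes
  set psys : ∀ k, Set (Set Ω) := fun k => Set.preimage (g k) '' boxes k with hpsys
  have hiIndep : iIndep (fun k => MeasurableSpace.comap (g k) inferInstance) μ := by
    refine iIndepSets.iIndep (fun k => (hgmeas k).comap_le) psys
      (fun k => IsPiSystem.comap isPiSystem_pi (g k)) (fun k => ?_) ?_
    · rw [← generateFrom_pi, MeasurableSpace.comap_generateFrom]
    · -- iIndepSets π μ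
      rw [iIndepSets_iff]
      intro S sets hsets
      -- extract box data
      have hdata : ∀ k ∈ S, ∃ s : Z k → Set ℝ,
          (∀ z, MeasurableSet (s z)) ∧ g k ⁻¹' (Set.pi Set.univ s) = sets k := by
        intro k hk
        obtain ⟨t, ht, hts⟩ := hsets k hk
        obtain ⟨s, hs, hst⟩ := ht
        exact ⟨s, fun z => hs z (Set.mem_univ z), by rw [hst, hts]⟩
      choose! s hs hseq using hdata
      -- sigma-indexed sets
      set sets' : (Σ k, Z k) → Set ℝ := fun p => if p.1 ∈ S then s p.1 p.2 else Set.univ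
        with hsets'
      have hmeas' : ∀ p : Σ k, Z k, p ∈ S.sigma (fun _ => Finset.univ) →
          MeasurableSet (sets' p) := by
        intro p hp
        rw [Finset.mem_sigma] at hp
        simp only [hsets', if_pos hp.1]
        exact hs p.1 hp.1 p.2
      have hprein : ∀ k ∈ S, (⋂ z : Z k, X k z ⁻¹' s k z) = sets k := by
        intro k hk
        rw [← hseq k hk]
        ext ω
        simp [hg, Set.mem_pi]
      have hLHS : (⋂ p ∈ S.sigma (fun _ => Finset.univ),
          (fun q : Σ k, Z k => X q.1 q.2) p ⁻¹' sets' p) = ⋂ k ∈ S, sets k := by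
        ext ω
        simp only [Set.mem_iInter, Finset.mem_sigma, Finset.mem_univ, and_true]
        constructor
        · intro hh k hk
          rw [← hprein k hk]
          simp only [Set.mem_iInter]
          intro z
          have := hh ⟨k, z⟩ hk
          simpa [hsets', if_pos hk] using this
        · intro hh p hp
          have := hh p.1 hp
          rw [← hprein p.1 hp] at this
          simp only [Set.mem_iInter] at this
          simpa [hsets', if_pos hp] using this p.2
      have hbig := hind.measure_inter_preimage_eq_mul (S.sigma (fun _ => Finset.univ))
        hmeas'
      rw [hLHS] at hbig
      rw [hbig, Finset.prod_sigma]
      refine Finset.prod_congr rfl fun k hk => ?_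
      have hsm : ∀ p : Σ k', Z k', p ∈ ({k} : Finset K).sigma (fun _ => Finset.univ) →
          MeasurableSet (sets' p) := by
        intro p hp
        rw [Finset.mem_sigma, Finset.mem_singleton] at hp
        have hp1 : p.1 ∈ S := hp.1 ▸ hk
        simp only [hsets', if_pos hp1]
        exact hs p.1 hp1 p.2
      have hsingle := hind.measure_inter_preimage_eq_mul
        (({k} : Finset K).sigma fun _ => Finset.univ) hsm
      have hL2 : (⋂ p ∈ ({k} : Finset K).sigma (fun _ => Finset.univ),
          (fun q : Σ k', Z k' => X q.1 q.2) p ⁻¹' sets' p) = sets k := by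
        rw [← hprein k hk]
        ext ω
        simp only [Set.mem_iInter, Finset.mem_sigma, Finset.mem_univ, and_true,
          Finset.mem_singleton]
        constructor
        · intro hh z
          have := hh ⟨k, z⟩ rfl
          simpa [hsets', if_pos hk] using this
        · rintro hh ⟨k', z'⟩ hp
          dsimp only at hp
          subst hp
          simpa [hsets', if_pos hk] using hh z'
      have hR2 : (∏ p ∈ ({k} : Finset K).sigma (fun _ => Finset.univ),
          μ ((fun q : Σ k', Z k' => X q.1 q.2) p ⁻¹' sets' p)) =
          ∏ z : Z k, μ (X k z ⁻¹' sets' ⟨k, z⟩) := by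
        rw [Finset.prod_sigma, Finset.prod_singleton]
      rw [← hR2, ← hsingle, hL2]
  have hfin := hiIndep.meas_iInter (fun k => ⟨B k, hB k, rfl⟩)
  exact hfin

end LPMAux

/-- **Local Perturb-and-MAP (main theorem).** Perturb `θ` by independent zero-mean Gumbel
noise `ε k z` attached to each block `β k` and each block configuration `z`. Then for any
fixed configuration `y`, the probability that `y` is a block-coordinate-wise maximum of the
perturbed potential equals the composite likelihood `∏ k, p(y_{β k} | y_{¬β k}; θ)`. -/
theorem local_perturb_and_map {n m : ℕ} {Y : Fin n → Type*}
    [∀ j, Fintype (Y j)] [∀ j, Nonempty (Y j)] [∀ j, DecidableEq (Y j)]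
    (θ : (∀ j, Y j) → ℝ)
    (β : Fin m → Finset (Fin n))
    (hdisj : ∀ k l, k ≠ l → Disjoint (β k) (β l))
    {Ω : Type*} [MeasurableSpace Ω] (μ : Measure Ω) [IsProbabilityMeasure μ]
    (ε : (k : Fin m) → ((j : {j // j ∈ β k}) → Y j.1) → Ω → ℝ)
    (hmeas : ∀ k z, Measurable (ε k z))
    (hindep : ProbabilityTheory.iIndepFun
      (fun (p : Σ k : Fin m, ((j : {j // j ∈ β k}) → Y j.1)) => ε p.1 p.2) μ)
    (hcdf : ∀ k z t, μ {ω | ε k z ω ≤ t} =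
      ENNReal.ofReal (Real.exp (-Real.exp (-(t + Real.eulerMascheroniConstant)))))
    (y : ∀ j, Y j) :
    μ {ω | ∀ k, ∀ z : (j : {j // j ∈ β k}) → Y j.1,
        θ (blockUpd (β k) y z) + ∑ l, ε l (fun j => blockUpd (β k) y z j.1) ω ≤
          θ y + ∑ l, ε l (fun j => y j.1) ω} =
      ∏ k, ENNReal.ofReal (Real.exp (θ y) /
        ∑ z : (j : {j // j ∈ β k}) → Y j.1, Real.exp (θ (blockUpd (β k) y z))) := by
  classical
  have hupdself : ∀ k, blockUpd (β k) y (fun j => y j.1) = y := by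
    intro k
    funext j
    by_cases h : j ∈ β k <;> simp [blockUpd, h]
  have hrestr_self : ∀ k (z : (j : {j // j ∈ β k}) → Y j.1),
      (fun j : {j // j ∈ β k} => blockUpd (β k) y z j.1) = z := by
    intro k z
    funext j
    simp [blockUpd, j.2]
  have hrestr_other : ∀ k l, l ≠ k → ∀ (z : (j : {j // j ∈ β k}) → Y j.1),
      (fun j : {j // j ∈ β l} => blockUpd (β k) y z j.1) =
        (fun j : {j // j ∈ β l} => y j.1) := by
    intro k l hlk z
    funext j
    have hj : j.1 ∉ β k := Finset.disjoint_left.mp (hdisj l k hlk) j.2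
    simp [blockUpd, hj]
  set B : ∀ k : Fin m, Set (((j : {j // j ∈ β k}) → Y j.1) → ℝ) := fun k =>
    {v | ∀ z, θ (blockUpd (β k) y z) + v z ≤ θ y + v (fun j => y j.1)} with hB
  have hBmeas : ∀ k, MeasurableSet (B k) := by
    intro k
    have : B k = ⋂ z, {v : ((j : {j // j ∈ β k}) → Y j.1) → ℝ |
        θ (blockUpd (β k) y z) + v z ≤ θ y + v (fun j => y j.1)} := by
      ext v; simp [hB]
    rw [this]
    exact MeasurableSet.iInter fun z => measurableSet_le
      (measurable_const.add (measurable_pi_apply z))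
      (measurable_const.add (measurable_pi_apply _))
  have hset : {ω | ∀ k, ∀ z : (j : {j // j ∈ β k}) → Y j.1,
        θ (blockUpd (β k) y z) + ∑ l, ε l (fun j => blockUpd (β k) y z j.1) ω ≤
          θ y + ∑ l, ε l (fun j => y j.1) ω} =
      ⋂ k, (fun ω (z : (j : {j // j ∈ β k}) → Y j.1) => ε k z ω) ⁻¹' B k := by
    ext ω
    simp only [Set.mem_setOf_eq, Set.mem_iInter, Set.mem_preimage, hB]
    refine forall_congr' fun k => forall_congr' fun z => ?_
    have hsum1 : ∑ l, ε l (fun j => blockUpd (β k) y z j.1) ω =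
        ε k z ω + ∑ l ∈ Finset.univ.erase k, ε l (fun j => y j.1) ω := by
      rw [← Finset.add_sum_erase _ _ (Finset.mem_univ k), hrestr_self k z]
      congr 1
      refine Finset.sum_congr rfl fun l hl => ?_
      rw [hrestr_other k l (Finset.ne_of_mem_erase hl) z]
    have hsum2 : ∑ l, ε l (fun j => y j.1) ω =
        ε k (fun j => y j.1) ω + ∑ l ∈ Finset.univ.erase k, ε l (fun j => y j.1) ω :=
      (Finset.add_sum_erase _ _ (Finset.mem_univ k)).symm
    rw [hsum1, hsum2, ← add_assoc, ← add_assoc, add_le_add_iff_right]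
  rw [hset]
  rw [grouped_indep_meas (fun k z => ε k z) hmeas hindep B hBmeas]
  refine Finset.prod_congr rfl fun k _ => ?_
  have hsub : ProbabilityTheory.iIndepFun
      (fun (z : (j : {j // j ∈ β k}) → Y j.1) => ε k z) μ :=
    iIndepFun_sub (fun z : (j : {j // j ∈ β k}) → Y j.1 =>
      (⟨k, z⟩ : Σ k : Fin m, ((j : {j // j ∈ β k}) → Y j.1)))
      (fun z z' h => by cases h; rfl) hindep
  have hlaw : ∀ z, μ.map (ε k z) = gumbel := fun z =>
    law_eq_gumbel μ (ε k z) (hmeas k z) (hcdf k z)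
  have hmap := map_pi μ (fun z => ε k z) (hmeas k) hlaw hsub
  rw [← Measure.map_apply (measurable_pi_lambda _ (hmeas k)) (hBmeas k), hmap]
  have hBk : B k = {v : ((j : {j // j ∈ β k}) → Y j.1) → ℝ |
      ∀ z, θ (blockUpd (β k) y z) + v z ≤
        θ (blockUpd (β k) y (fun j => y j.1)) + v (fun j => y j.1)} := by
    rw [hupdself k]
  rw [hBk, block_prob (fun z => θ (blockUpd (β k) y z)) (fun j => y j.1), hupdself k]
end

section
/- Let Y be a finite product space, θ : Y → ℝ, and 𝓑 pairwise disjoint blocks with i.i.d. Gumbel perturbations per block. Since the perturbed potential ~θ always has at least one global maximizer, and any global maximizer is a block-coordinate-wise maximum, the random set Loc[~θ; 𝓑] of block-coordinate-wise maxima is almost surely nonempty; consequently Σ_{y∈Y} ∏_{β∈𝓑} p(y_β | y_{¬β}; θ) ≥ 1. -/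
open Real Finset

open MeasureTheory
open scoped ENNReal

noncomputable def unif : Measure ℝ := MeasureTheory.volume.restrict (Set.Ioc 0 1)

instance : IsProbabilityMeasure unif := ⟨by simp [unif, Real.volume_Ioc]⟩

lemma race {ι : Type*} [Fintype ι] [DecidableEq ι] (i0 : ι) (b : ι → ℝ)
    (hb : ∀ i, 0 < b i) :
    (Measure.pi fun _ : ι => unif)
      {u : ι → ℝ | ∀ i, b i * (-Real.log (u i0)) ≤ b i0 * (-Real.log (u i))}
      = ENNReal.ofReal (b i0 / ∑ i, b i) := by
  classical
  haveI : Nonempty ι := ⟨i0⟩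
  letI : Unique {i // i = i0} := ⟨⟨⟨i0, rfl⟩⟩, by rintro ⟨_, rfl⟩; rfl⟩
  set c : {i // ¬ i = i0} → ℝ := fun j => b j / b i0 with hc
  set S : ℝ := ∑ j, c j with hSdef
  have hc0 : ∀ j, 0 ≤ c j := fun j => div_nonneg (hb _).le (hb i0).le
  have hS0 : 0 ≤ S := Finset.sum_nonneg fun j _ => hc0 j
  have hval : b i0 / ∑ i, b i = 1 / (S + 1) := by
    have hbig : ∑ j : {i // ¬ i = i0}, b ↑j = ∑ i ∈ univ.erase i0, b i :=
      (Finset.sum_subtype (univ.erase i0) (fun i => by simp) b).symm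
    have hS : S = (∑ i ∈ univ.erase i0, b i) / b i0 := by
      rw [hSdef, hc, ← Finset.sum_div, hbig]
    have h1 : S + 1 = (∑ i, b i) / b i0 := by
      rw [hS, div_add' _ _ _ (hb i0).ne', one_mul, Finset.sum_erase_add univ b (mem_univ i0)]
    rw [h1, one_div_div]
  rw [hval]
  set ν : Measure ({i // ¬ i = i0} → ℝ) := Measure.pi fun _ => unif with hν
  have mp : MeasurePreserving
      ((Prod.map (MeasurableEquiv.funUnique {i // i = i0} ℝ) id) ∘
        (MeasurableEquiv.piEquivPiSubtypeProd (fun _ : ι => ℝ) (fun i => i = i0)))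
      (Measure.pi fun _ : ι => unif) (unif.prod ν) := by
    refine MeasurePreserving.comp
      ((measurePreserving_funUnique unif _).prod (MeasurePreserving.id ν)) ?_
    convert measurePreserving_piEquivPiSubtypeProd (fun _ : ι => unif) (fun i => i = i0) using 2
    congr!
  set B : Set (ℝ × ({i // ¬ i = i0} → ℝ)) :=
    {p | ∀ j : {i // ¬ i = i0}, b ↑j * (-Real.log p.1) ≤ b i0 * (-Real.log (p.2 j))} with hB
  have hBmeas : MeasurableSet B := by
    have : B = ⋂ j : {i // ¬ i = i0},
        {p : ℝ × ({i // ¬ i = i0} → ℝ) | b ↑j * (-Real.log p.1) ≤ b i0 * (-Real.log (p.2 j))} := by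
      ext p; simp [hB]
    rw [this]
    exact MeasurableSet.iInter fun j => measurableSet_le
      (((Real.measurable_log.comp measurable_fst).neg).const_mul _)
      (((Real.measurable_log.comp ((measurable_pi_apply j).comp measurable_snd)).neg).const_mul _)
  have hpre : ((Prod.map (MeasurableEquiv.funUnique {i // i = i0} ℝ) id) ∘
        (MeasurableEquiv.piEquivPiSubtypeProd (fun _ : ι => ℝ) (fun i => i = i0))) ⁻¹' B
      = {u : ι → ℝ | ∀ i, b i * (-Real.log (u i0)) ≤ b i0 * (-Real.log (u i))} := by
    ext u
    simp only [Set.mem_preimage, Function.comp_apply, hB, Set.mem_setOf_eq]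
    constructor
    · intro h i
      by_cases hi : i = i0
      · subst hi; exact le_refl _
      · exact h ⟨i, hi⟩
    · intro h j
      exact h j.1
  rw [← hpre, mp.measure_preimage hBmeas.nullMeasurableSet]
  rw [Measure.prod_apply hBmeas]
  have hsec : ∀ t ∈ Set.Ioc (0:ℝ) 1,
      ν (Prod.mk t ⁻¹' B) = ENNReal.ofReal (t ^ S) := by
    intro t ht
    have hlogt : Real.log t ≤ 0 := Real.log_nonpos ht.1.le ht.2
    have hBsec : Prod.mk t ⁻¹' B = Set.pi Set.univ fun j : {i // ¬ i = i0} =>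
        {x : ℝ | b ↑j * (-Real.log t) ≤ b i0 * (-Real.log x)} := by
      ext v; simp [hB, Set.mem_pi]
    rw [hBsec, hν, Measure.pi_pi]
    have hkey : ∀ (j : {i // ¬ i = i0}) (x : ℝ),
        (b ↑j * (-Real.log t) ≤ b i0 * (-Real.log x)) ↔ Real.log x ≤ c j * Real.log t := by
      intro j x
      rw [mul_neg, mul_neg, neg_le_neg_iff, hc, div_mul_eq_mul_div, le_div_iff₀ (hb i0),
        mul_comm (Real.log x) (b i0)]
    have hone : ∀ j : {i // ¬ i = i0},
        unif {x : ℝ | b ↑j * (-Real.log t) ≤ b i0 * (-Real.log x)}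
        = ENNReal.ofReal (Real.exp (c j * Real.log t)) := by
      intro j
      have hset : {x : ℝ | b ↑j * (-Real.log t) ≤ b i0 * (-Real.log x)} ∩ Set.Ioc 0 1
          = Set.Ioc 0 (Real.exp (c j * Real.log t)) := by
        ext x
        simp only [Set.mem_inter_iff, Set.mem_setOf_eq, Set.mem_Ioc]
        constructor
        · rintro ⟨hcond, hx0, hx1⟩
          refine ⟨hx0, ?_⟩
          have := (hkey j x).1 hcond
          calc x = Real.exp (Real.log x) := (Real.exp_log hx0).symm
            _ ≤ _ := Real.exp_le_exp.2 this
        · rintro ⟨hx0, hxle⟩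
          have hexple : Real.exp (c j * Real.log t) ≤ 1 := by
            rw [Real.exp_le_one_iff]
            exact mul_nonpos_iff.2 (Or.inl ⟨hc0 j, hlogt⟩)
          refine ⟨(hkey j x).2 ?_, hx0, hxle.trans hexple⟩
          calc Real.log x ≤ Real.log (Real.exp (c j * Real.log t)) :=
                Real.log_le_log hx0 hxle
            _ = c j * Real.log t := Real.log_exp _
      rw [unif, Measure.restrict_apply' measurableSet_Ioc, hset, Real.volume_Ioc]
      simp
    calc (∏ j : {i // ¬ i = i0}, unif {x : ℝ | b ↑j * (-Real.log t) ≤ b i0 * (-Real.log x)})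
        = ∏ j : {i // ¬ i = i0}, ENNReal.ofReal (Real.exp (c j * Real.log t)) :=
          Finset.prod_congr rfl fun j _ => hone j
      _ = ENNReal.ofReal (∏ j : {i // ¬ i = i0}, Real.exp (c j * Real.log t)) :=
          (ENNReal.ofReal_prod_of_nonneg fun j _ => (Real.exp_pos _).le).symm
      _ = ENNReal.ofReal (Real.exp (∑ j : {i // ¬ i = i0}, c j * Real.log t)) := by
          rw [Real.exp_sum]
      _ = ENNReal.ofReal (t ^ S) := by
          rw [← Finset.sum_mul, ← hSdef, Real.rpow_def_of_pos ht.1, mul_comm]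
  unfold unif
  rw [setLIntegral_congr_fun measurableSet_Ioc hsec]
  have hint : IntegrableOn (fun t : ℝ => t ^ S) (Set.Ioc 0 1) := by
    have h1 : IntervalIntegrable (fun t : ℝ => t ^ S) MeasureTheory.volume 0 1 :=
      intervalIntegral.intervalIntegrable_rpow' (by linarith)
    rwa [intervalIntegrable_iff_integrableOn_Ioc_of_le zero_le_one] at h1
  rw [← MeasureTheory.ofReal_integral_eq_lintegral_ofReal hint ?nn]
  · congr 1
    rw [← intervalIntegral.integral_of_le zero_le_one,
      integral_rpow (Or.inl (by linarith : (-1:ℝ) < S))]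
    rw [Real.one_rpow, Real.zero_rpow (by linarith : S + 1 ≠ 0)]
    ring
  case nn =>
    filter_upwards [ae_restrict_mem measurableSet_Ioc] with t ht
    exact Real.rpow_nonneg ht.1.le _

lemma blockUpd_self {n : ℕ} {Y : Fin n → Type*} (B : Finset (Fin n)) (y : ∀ j, Y j) :
    blockUpd B y (fun j => y j.1) = y := by
  funext j
  unfold blockUpd
  split <;> rfl

lemma blockUpd_mem {n : ℕ} {Y : Fin n → Type*} (B : Finset (Fin n)) (y : ∀ j, Y j)
    (z : ∀ j : {j // j ∈ B}, Y j.1) (j : Fin n) (hj : j ∈ B) :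
    blockUpd B y z j = z ⟨j, hj⟩ := by
  unfold blockUpd
  rw [dif_pos hj]

lemma blockUpd_not_mem {n : ℕ} {Y : Fin n → Type*} (B : Finset (Fin n)) (y : ∀ j, Y j)
    (z : ∀ j : {j // j ∈ B}, Y j.1) (j : Fin n) (hj : j ∉ B) :
    blockUpd B y z j = y j := by
  unfold blockUpd
  rw [dif_neg hj]

lemma block_prob_s12 {n : ℕ} {Y : Fin n → Type*} [∀ j, Fintype (Y j)] [∀ j, Nonempty (Y j)]
    [∀ j, DecidableEq (Y j)] (θ : (∀ j, Y j) → ℝ) (B : Finset (Fin n)) (y : ∀ j, Y j) :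
    (Measure.pi fun _ : (j : {j // j ∈ B}) → Y j.1 => unif)
      {u : ((j : {j // j ∈ B}) → Y j.1) → ℝ |
        ∀ w, Real.exp (θ (blockUpd B y w)) * (-Real.log (u fun j => y j.1)) ≤
          Real.exp (θ y) * (-Real.log (u w))}
      = ENNReal.ofReal (Real.exp (θ y) /
          ∑ z : (j : {j // j ∈ B}) → Y j.1, Real.exp (θ (blockUpd B y z))) := by
  classical
  have h := race (ι := (j : {j // j ∈ B}) → Y j.1) (fun j => y j.1)
    (fun w => Real.exp (θ (blockUpd B y w))) (fun _ => Real.exp_pos _)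
  simp only [blockUpd_self] at h
  exact h

/-- **The composite likelihood normalizer is at least one.** Since the set of
block-coordinate-wise maxima of the perturbed potential is always nonempty (any global
maximizer belongs to it), the sum over all configurations of the composite likelihood
`∏ k, p(y_{β k} | y_{¬β k}; θ)` is at least `1`. -/
theorem sum_composite_likelihood_ge_one {n m : ℕ} {Y : Fin n → Type*}
    [∀ j, Fintype (Y j)] [∀ j, Nonempty (Y j)] [∀ j, DecidableEq (Y j)]
    (θ : (∀ j, Y j) → ℝ)
    (β : Fin m → Finset (Fin n))
    (hdisj : ∀ k l, k ≠ l → Disjoint (β k) (β l)) :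
    1 ≤ ∑ y : ∀ j, Y j, ∏ k, (Real.exp (θ y) /
        ∑ z : (j : {j // j ∈ β k}) → Y j.1, Real.exp (θ (blockUpd (β k) y z))) := by
  classical
  have hpos : ∀ (k : Fin m) (y : ∀ j, Y j),
      0 < ∑ z : (j : {j // j ∈ β k}) → Y j.1, Real.exp (θ (blockUpd (β k) y z)) :=
    fun k y => Finset.sum_pos (fun z _ => Real.exp_pos _) univ_nonempty
  set μ : Measure (∀ k : Fin m, ((j : {j // j ∈ β k}) → Y j.1) → ℝ) :=
    Measure.pi fun k => Measure.pi fun _ : (j : {j // j ∈ β k}) → Y j.1 => unif with hμ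
  set A : (k : Fin m) → (∀ j, Y j) → Set (((j : {j // j ∈ β k}) → Y j.1) → ℝ) :=
    fun k y => {u | ∀ w, Real.exp (θ (blockUpd (β k) y w)) * (-Real.log (u fun j => y j.1)) ≤
      Real.exp (θ y) * (-Real.log (u w))} with hAdef
  -- coverage
  have hcover : (Set.pi Set.univ fun k : Fin m =>
        Set.pi Set.univ fun _ : (j : {j // j ∈ β k}) → Y j.1 => Set.Ioo (0:ℝ) 1)
      ⊆ ⋃ y : ∀ j, Y j, Set.pi Set.univ fun k => A k y := by
    intro ω hω
    have hωmem : ∀ (l : Fin m) (z : (j : {j // j ∈ β l}) → Y j.1), ω l z ∈ Set.Ioo (0:ℝ) 1 :=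
      fun l z => (hω l (Set.mem_univ l)) z (Set.mem_univ z)
    have hT : ∀ (l : Fin m) (z : (j : {j // j ∈ β l}) → Y j.1), 0 < -Real.log (ω l z) := by
      intro l z
      have h := Real.log_neg (hωmem l z).1 (hωmem l z).2
      linarith
    obtain ⟨ys, hys⟩ := Finite.exists_max fun y : ∀ j, Y j =>
      θ y - ∑ l : Fin m, Real.log (-Real.log (ω l fun j => y j.1))
    refine Set.mem_iUnion.2 ⟨ys, ?_⟩
    intro k _
    intro w
    set y' := blockUpd (β k) ys w with hy'
    have hblk : ∀ l : Fin m, l ≠ k →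
        (fun j : {j // j ∈ β l} => y' j.1) = (fun j : {j // j ∈ β l} => ys j.1) := by
      intro l hl
      funext j
      exact blockUpd_not_mem _ _ _ _ fun hjk => (Finset.disjoint_left.1 (hdisj l k hl)) j.2 hjk
    have hblkk : (fun j : {j // j ∈ β k} => y' j.1) = w := by
      funext j
      exact blockUpd_mem _ _ _ _ j.2
    have hmax := hys y'
    rw [← Finset.sum_erase_add univ _ (mem_univ k), ← Finset.sum_erase_add univ
      (fun l => Real.log (-Real.log (ω l fun j => ys j.1))) (mem_univ k)] at hmax
    have heq : (∑ l ∈ univ.erase k, Real.log (-Real.log (ω l fun j => y' j.1)))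
        = ∑ l ∈ univ.erase k, Real.log (-Real.log (ω l fun j => ys j.1)) :=
      Finset.sum_congr rfl fun l hl => by rw [hblk l (Finset.mem_erase.1 hl).1]
    rw [heq, hblkk] at hmax
    have h2 : θ y' + Real.log (-Real.log (ω k fun j => ys j.1))
        ≤ θ ys + Real.log (-Real.log (ω k w)) := by linarith
    have h3 := Real.exp_le_exp.2 h2
    rw [Real.exp_add, Real.exp_add, Real.exp_log (hT k _), Real.exp_log (hT k w)] at h3
    exact h3
  have hG : μ (Set.pi Set.univ fun k : Fin m =>
      Set.pi Set.univ fun _ : (j : {j // j ∈ β k}) → Y j.1 => Set.Ioo (0:ℝ) 1) = 1 := by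
    rw [hμ, Measure.pi_pi]
    have h1 : unif (Set.Ioo (0:ℝ) 1) = 1 := by
      rw [unif, Measure.restrict_apply measurableSet_Ioo,
        Set.inter_eq_left.2 Set.Ioo_subset_Ioc_self]
      simp [Real.volume_Ioo]
    have h2 : ∀ k : Fin m, (Measure.pi fun _ : (j : {j // j ∈ β k}) → Y j.1 => unif)
        (Set.pi Set.univ fun _ => Set.Ioo (0:ℝ) 1) = 1 := by
      intro k
      rw [Measure.pi_pi]
      simp [h1]
    simp [h2]
  have h1 : (1 : ℝ≥0∞) ≤ μ (⋃ y : ∀ j, Y j, Set.pi Set.univ fun k => A k y) :=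
    hG ▸ measure_mono hcover
  have h2 : μ (⋃ y : ∀ j, Y j, Set.pi Set.univ fun k => A k y)
      ≤ ∑ y : ∀ j, Y j, ENNReal.ofReal (∏ k, (Real.exp (θ y) /
          ∑ z : (j : {j // j ∈ β k}) → Y j.1, Real.exp (θ (blockUpd (β k) y z)))) := by
    refine (measure_iUnion_fintype_le μ _).trans ?_
    refine Finset.sum_le_sum fun y _ => ?_
    rw [hμ, Measure.pi_pi,
      ENNReal.ofReal_prod_of_nonneg fun k _ => div_nonneg (Real.exp_pos _).le (hpos k y).le]
    exact le_of_eq (Finset.prod_congr rfl fun k _ => block_prob_s12 θ (β k) y)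
  have h3 : (∑ y : ∀ j, Y j, ENNReal.ofReal (∏ k, (Real.exp (θ y) /
        ∑ z : (j : {j // j ∈ β k}) → Y j.1, Real.exp (θ (blockUpd (β k) y z)))))
      = ENNReal.ofReal (∑ y : ∀ j, Y j, ∏ k, (Real.exp (θ y) /
        ∑ z : (j : {j // j ∈ β k}) → Y j.1, Real.exp (θ (blockUpd (β k) y z)))) :=
    (ENNReal.ofReal_sum_of_nonneg fun y _ =>
      Finset.prod_nonneg fun k _ => div_nonneg (Real.exp_pos _).le (hpos k y).le).symm
  exact ENNReal.one_le_ofReal.1 (h1.trans (h2.trans_eq h3))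
end
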